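/- Let f : M → M' be an isomorphism of Alexander biquandles with f(0) = 0. Then for all x, y ∈ (1−st)·M (i.e., elements of the submodule (1−st)M), f(x + y) = f(x) + f(y). Consequently the restriction of f to (1−st)M is additive. -/

import Mathlib

noncomputable section

/-- The Laurent polynomial ring `ℤ[s^{±1}, t^{±1}]` in two variables,
realized as the group algebra of `ℤ × ℤ` over `ℤ`. -/
abbrev L : Type := AddMonoidAlgebra ℤ (ℤ × ℤ)

/-- The variable `s`. -/
def sL : L := AddMonoidAlgebra.single (1, 0) 1
/-- The variable `t`. -/
def tL : L := AddMonoidAlgebra.single (0, 1) 1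
/-- The inverse `s⁻¹`. -/
def sLi : L := AddMonoidAlgebra.single (-1, 0) 1
/-- The inverse `t⁻¹`. -/
def tLi : L := AddMonoidAlgebra.single (0, -1) 1

/-- `s` as a unit of `L`. -/
def sU : Lˣ where
  val := sL
  inv := sLi
  val_inv := by
    simp [sL, sLi, AddMonoidAlgebra.single_mul_single, AddMonoidAlgebra.one_def, Prod.ext_iff]
    rfl
  inv_val := by
    simp [sL, sLi, AddMonoidAlgebra.single_mul_single, AddMonoidAlgebra.one_def, Prod.ext_iff]
    rfl

/-- The submodule `(1-st)M`. -/
def Dsub (M : Type) [AddCommGroup M] [Module L M] : Submodule L M :=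
  LinearMap.range (LinearMap.lsmul L M (1 - sL * tL))

/-- The `s`-orbit `O_s(X)` of a subset `X ⊆ M`. -/
def Os {M : Type} [AddCommGroup M] [Module L M] (X : Set M) : Set M :=
  { y | ∃ (n : ℤ) (x : M), x ∈ X ∧ y = ((sU ^ n : Lˣ) : L) • x }

/-- `A` is a set of coset representatives for `M/(1-st)M`. -/
def IsCR (M : Type) [AddCommGroup M] [Module L M] (A : Set M) : Prop :=
  ∀ x : M, ∃! a, a ∈ A ∧ x - a ∈ Dsub M

/-- `f` preserves the four Alexander biquandle operations. -/
def IsBqHom {M M' : Type} [AddCommGroup M] [Module L M] [AddCommGroup M'] [Module L M']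
    (f : M → M') : Prop :=
  (∀ x y : M, f (tL • x + (1 - sL * tL) • y) = tL • f x + (1 - sL * tL) • f y) ∧
  (∀ x : M, f (sL • x) = sL • f x) ∧
  (∀ x y : M, f (tLi • x + (1 - sLi * tLi) • y) = tLi • f x + (1 - sLi * tLi) • f y) ∧
  (∀ x : M, f (sLi • x) = sLi • f x)

theorem stmt_5 {M M' : Type} [AddCommGroup M] [Module L M] [AddCommGroup M'] [Module L M']
    (f : M → M') (hbij : Function.Bijective f) (hhom : IsBqHom f) (h0 : f 0 = 0) :
    ∀ x ∈ Dsub M, ∀ y ∈ Dsub M, f (x + y) = f x + f y := by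
  have ht : tL * tLi = 1 := by
    simp [tL, tLi, AddMonoidAlgebra.single_mul_single, AddMonoidAlgebra.one_def, Prod.ext_iff]
    rfl
  intro x hx y hy
  obtain ⟨v, hv⟩ := hy
  have hv' : (1 - sL * tL) • v = y := hv
  have hfx : f x = tL • f (tLi • x) := by
    have h := hhom.1 (tLi • x) 0
    simpa [smul_smul, ht, h0] using h
  have hfy : f y = (1 - sL * tL) • f v := by
    have h := hhom.1 0 v
    simpa [h0, hv'] using h
  have h := hhom.1 (tLi • x) v
  rw [smul_smul, ht, one_smul, hv'] at h
  rw [h, hfx, hfy]
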